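/- Let (H,α) be a monoidal Hom-Hopf algebra over a commutative ring k. Define the right adjoint Hom-action by g◁h := (S(h₁)α⁻¹(g))α(h₂) for g,h ∈ H. Then ◁ makes (H,α) a right (H,α)-Hom-module over itself; explicitly, for all g,h,l ∈ H: α(g◁h)=α(g)◁α(h), α(g)◁(hl)=(g◁h)◁α(l), and g◁1=α(g). -/

import Mathlib

open TensorProduct

noncomputable def tmul2 {k A B C D E F : Type*} [CommRing k]
    [AddCommGroup A] [AddCommGroup B] [AddCommGroup C] [AddCommGroup D]
    [AddCommGroup E] [AddCommGroup F]
    [Module k A] [Module k B] [Module k C] [Module k D] [Module k E] [Module k F]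
    (f : A →ₗ[k] C →ₗ[k] E) (g : B →ₗ[k] D →ₗ[k] F) :
    (A ⊗[k] B) →ₗ[k] (C ⊗[k] D) →ₗ[k] (E ⊗[k] F) :=
  TensorProduct.curry
    ((TensorProduct.map (TensorProduct.lift f) (TensorProduct.lift g)) ∘ₗ
      (TensorProduct.tensorTensorTensorComm k A B C D).toLinearMap)

@[simp] lemma tmul2_tmul {k A B C D E F : Type*} [CommRing k]
    [AddCommGroup A] [AddCommGroup B] [AddCommGroup C] [AddCommGroup D]
    [AddCommGroup E] [AddCommGroup F]
    [Module k A] [Module k B] [Module k C] [Module k D] [Module k E] [Module k F]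
    (f : A →ₗ[k] C →ₗ[k] E) (g : B →ₗ[k] D →ₗ[k] F) (a : A) (b : B) (c : C) (d : D) :
    tmul2 f g (a ⊗ₜ b) (c ⊗ₜ d) = f a c ⊗ₜ g b d := by
  simp [tmul2]
/-- A monoidal Hom-Hopf algebra over a commutative ring `k`. -/
structure MonHomHopf (k H : Type*) [CommRing k] [AddCommGroup H] [Module k H] where
  α : H ≃ₗ[k] H
  mul : H →ₗ[k] H →ₗ[k] H
  one : H
  comul : H →ₗ[k] H ⊗[k] H
  counit : H →ₗ[k] k
  S : H →ₗ[k] H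
  alpha_mul : ∀ g h, α (mul g h) = mul (α g) (α h)
  alpha_one : α one = one
  hom_assoc : ∀ g h l, mul (α g) (mul h l) = mul (mul g h) (α l)
  mul_one' : ∀ h, mul h one = α h
  one_mul' : ∀ h, mul one h = α h
  comul_alpha : ∀ h, comul (α h)
    = TensorProduct.map α.toLinearMap α.toLinearMap (comul h)
  counit_alpha : ∀ h, counit (α h) = counit h
  hom_coassoc : ∀ h,
    (TensorProduct.assoc k H H H) ((TensorProduct.map comul α.symm.toLinearMap) (comul h))
      = (TensorProduct.map α.symm.toLinearMap comul) (comul h)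
  counit_comul_left : ∀ h,
    (TensorProduct.lid k H) ((TensorProduct.map counit LinearMap.id) (comul h)) = α.symm h
  counit_comul_right : ∀ h,
    (TensorProduct.rid k H) ((TensorProduct.map LinearMap.id counit) (comul h)) = α.symm h
  comul_mul : ∀ g h, comul (mul g h) = tmul2 mul mul (comul g) (comul h)
  comul_one : comul one = one ⊗ₜ[k] one
  counit_mul : ∀ g h, counit (mul g h) = counit g * counit h
  counit_one : counit one = 1
  antipode_left : ∀ h,
    (TensorProduct.lift mul) ((TensorProduct.map S LinearMap.id) (comul h)) = counit h • one
  antipode_right : ∀ h,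
    (TensorProduct.lift mul) ((TensorProduct.map LinearMap.id S) (comul h)) = counit h • one
  S_alpha : ∀ h, S (α h) = α (S h)

/-- The right adjoint Hom-action `g ◁ h = (S(h₁) α⁻¹(g)) α(h₂)`, as a linear map in `h`. -/
noncomputable def MonHomHopf.adRL {k H : Type*} [CommRing k] [AddCommGroup H] [Module k H]
    (A : MonHomHopf k H) (g : H) : H →ₗ[k] H :=
  (TensorProduct.lift
    ((A.mul.comp ((A.mul.flip (A.α.symm g)).comp A.S)).compl₂ A.α.toLinearMap)) ∘ₗ A.comul

namespace MonHomHopf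

variable {k H : Type*} [CommRing k] [AddCommGroup H] [Module k H] (A : MonHomHopf k H)

/-- untwisted multiplication -/
noncomputable def um : H →ₗ[k] H →ₗ[k] H := A.mul.compr₂ A.α.symm.toLinearMap

/-- untwisted comultiplication -/
noncomputable def uD : H →ₗ[k] H ⊗[k] H := A.comul ∘ₗ A.α.toLinearMap

@[simp] lemma um_apply (g h : H) : A.um g h = A.α.symm (A.mul g h) := rfl
@[simp] lemma uD_apply (h : H) : A.uD h = A.comul (A.α h) := rfl

lemma alpha_symm_mul (g h : H) :
    A.α.symm (A.mul g h) = A.mul (A.α.symm g) (A.α.symm h) := by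
  apply A.α.injective
  rw [A.α.apply_symm_apply, A.alpha_mul, A.α.apply_symm_apply, A.α.apply_symm_apply]

lemma S_alpha_symm (h : H) : A.S (A.α.symm h) = A.α.symm (A.S h) := by
  apply A.α.injective
  rw [← A.S_alpha, A.α.apply_symm_apply, A.α.apply_symm_apply]

lemma um_assoc (a b c : H) : A.um (A.um a b) c = A.um a (A.um b c) := by
  simp only [um_apply]
  have h := A.hom_assoc (A.α.symm a) (A.α.symm b) (A.α.symm c)
  simp only [A.α.apply_symm_apply] at h
  rw [A.alpha_symm_mul a b, A.alpha_symm_mul b c, h]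

lemma um_one (a : H) : A.um a A.one = a := by
  simp [A.mul_one']

lemma one_um (a : H) : A.um A.one a = a := by
  simp [A.one_mul']

lemma S_one : A.S A.one = A.one := by
  have h := A.antipode_left A.one
  rw [A.comul_one] at h
  simp only [TensorProduct.map_tmul, LinearMap.id_coe, id_eq, TensorProduct.lift.tmul,
    A.counit_one, one_smul, A.mul_one'] at h
  apply A.α.injective
  rw [h, A.alpha_one]

end MonHomHopf
namespace MonHomHopf

variable {k H : Type*} [CommRing k] [AddCommGroup H] [Module k H] (A : MonHomHopf k H)

lemma map_alpha_alpha_comp₁ :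
    TensorProduct.map A.comul A.α.symm.toLinearMap ∘ₗ
      TensorProduct.map A.α.toLinearMap A.α.toLinearMap
      = TensorProduct.map A.uD LinearMap.id := by
  rw [← TensorProduct.map_comp]
  congr 1
  ext x; simp

lemma map_alpha_alpha_comp₂ :
    TensorProduct.map A.α.symm.toLinearMap A.comul ∘ₗ
      TensorProduct.map A.α.toLinearMap A.α.toLinearMap
      = TensorProduct.map LinearMap.id A.uD := by
  rw [← TensorProduct.map_comp]
  congr 1
  ext x; simp

lemma uD_coassoc (h : H) :
    (TensorProduct.assoc k H H H) ((TensorProduct.map A.uD LinearMap.id) (A.uD h))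
      = (TensorProduct.map LinearMap.id A.uD) (A.uD h) := by
  have h0 := A.hom_coassoc (A.α (A.α h))
  rw [A.comul_alpha (A.α h)] at h0
  have e1 := LinearMap.congr_fun A.map_alpha_alpha_comp₁ (A.comul (A.α h))
  have e2 := LinearMap.congr_fun A.map_alpha_alpha_comp₂ (A.comul (A.α h))
  simp only [LinearMap.comp_apply] at e1 e2
  rw [e1, e2] at h0
  simpa only [uD_apply] using h0

lemma uD_counit_left (h : H) :
    (TensorProduct.lid k H) ((TensorProduct.map A.counit LinearMap.id) (A.uD h)) = h := by
  have := A.counit_comul_left (A.α h)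
  simpa only [uD_apply, A.α.symm_apply_apply] using this

lemma uD_counit_right (h : H) :
    (TensorProduct.rid k H) ((TensorProduct.map LinearMap.id A.counit) (A.uD h)) = h := by
  have := A.counit_comul_right (A.α h)
  simpa only [uD_apply, A.α.symm_apply_apply] using this

lemma lift_um_comp_alpha :
    TensorProduct.lift A.um ∘ₗ TensorProduct.map A.α.toLinearMap A.α.toLinearMap
      = TensorProduct.lift A.mul := by
  ext x y
  simp [← A.alpha_mul]

lemma uD_antipode_left (h : H) :
    (TensorProduct.lift A.um) ((TensorProduct.map A.S LinearMap.id) (A.uD h))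
      = A.counit h • A.one := by
  have m1 : TensorProduct.map A.S LinearMap.id ∘ₗ
      TensorProduct.map A.α.toLinearMap A.α.toLinearMap
      = TensorProduct.map A.α.toLinearMap A.α.toLinearMap ∘ₗ
        TensorProduct.map A.S LinearMap.id := by
    ext x y; simp [A.S_alpha]
  have e1 := LinearMap.congr_fun m1 (A.comul h)
  simp only [LinearMap.comp_apply] at e1
  rw [uD_apply, A.comul_alpha, e1, ← LinearMap.comp_apply (TensorProduct.lift A.um),
    A.lift_um_comp_alpha, A.antipode_left]

lemma uD_antipode_right (h : H) :
    (TensorProduct.lift A.um) ((TensorProduct.map LinearMap.id A.S) (A.uD h))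
      = A.counit h • A.one := by
  have m1 : TensorProduct.map LinearMap.id A.S ∘ₗ
      TensorProduct.map A.α.toLinearMap A.α.toLinearMap
      = TensorProduct.map A.α.toLinearMap A.α.toLinearMap ∘ₗ
        TensorProduct.map LinearMap.id A.S := by
    ext x y; simp [A.S_alpha]
  have e1 := LinearMap.congr_fun m1 (A.comul h)
  simp only [LinearMap.comp_apply] at e1
  rw [uD_apply, A.comul_alpha, e1, ← LinearMap.comp_apply (TensorProduct.lift A.um),
    A.lift_um_comp_alpha, A.antipode_right]

lemma tmul2_um_alpha (u v : H ⊗[k] H) :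
    tmul2 A.um A.um (TensorProduct.map A.α.toLinearMap A.α.toLinearMap u)
      (TensorProduct.map A.α.toLinearMap A.α.toLinearMap v)
      = tmul2 A.mul A.mul u v := by
  induction u using TensorProduct.induction_on with
  | zero => simp
  | tmul a b =>
    induction v using TensorProduct.induction_on with
    | zero => simp
    | tmul c d => simp [← A.alpha_mul]
    | add v₁ v₂ h₁ h₂ => simp only [map_add, h₁, h₂]
  | add u₁ u₂ h₁ h₂ => simp only [map_add, LinearMap.add_apply, h₁, h₂]

lemma uD_um (a b : H) :
    A.uD (A.um a b) = tmul2 A.um A.um (A.uD a) (A.uD b) := by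
  simp only [uD_apply, um_apply, A.α.apply_symm_apply]
  rw [A.comul_mul, ← A.tmul2_um_alpha, ← A.comul_alpha, ← A.comul_alpha]

lemma counit_um (a b : H) : A.counit (A.um a b) = A.counit a * A.counit b := by
  have := A.counit_alpha (A.α.symm (A.mul a b))
  rw [A.α.apply_symm_apply] at this
  rw [um_apply, ← this, A.counit_mul]

lemma uD_one : A.uD A.one = A.one ⊗ₜ[k] A.one := by
  rw [uD_apply, A.alpha_one, A.comul_one]

end MonHomHopf
namespace MonHomHopf

variable {k H : Type*} [CommRing k] [AddCommGroup H] [Module k H] (A : MonHomHopf k H)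

/-- comultiplication on `H ⊗ H` -/
noncomputable def DeltaC : (H ⊗[k] H) →ₗ[k] (H ⊗[k] H) ⊗[k] (H ⊗[k] H) :=
  (TensorProduct.tensorTensorTensorComm k H H H H).toLinearMap ∘ₗ
    TensorProduct.map A.uD A.uD

@[simp] lemma DeltaC_tmul (a b : H) :
    A.DeltaC (a ⊗ₜ b)
      = (TensorProduct.tensorTensorTensorComm k H H H H) (A.uD a ⊗ₜ A.uD b) := by
  simp [DeltaC]

/-- counit on `H ⊗ H` -/
noncomputable def epsC : (H ⊗[k] H) →ₗ[k] k :=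
  TensorProduct.lift ((LinearMap.mul k k ∘ₗ A.counit).compl₂ A.counit)

@[simp] lemma epsC_tmul (a b : H) : A.epsC (a ⊗ₜ b) = A.counit a * A.counit b := by
  simp [epsC]

noncomputable def eC : (H ⊗[k] H) →ₗ[k] H := (A.epsC).smulRight A.one

@[simp] lemma eC_apply (t : H ⊗[k] H) : A.eC t = A.epsC t • A.one := rfl

/-- convolution product on maps `H ⊗ H → H` -/
noncomputable def conv (F G : H ⊗[k] H →ₗ[k] H) : H ⊗[k] H →ₗ[k] H :=
  TensorProduct.lift A.um ∘ₗ TensorProduct.map F G ∘ₗ A.DeltaC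

lemma conv_apply (F G : H ⊗[k] H →ₗ[k] H) (c : H ⊗[k] H) :
    A.conv F G c = TensorProduct.lift A.um (TensorProduct.map F G (A.DeltaC c)) := rfl

/-- the shuffle `((a₁ ⊗ (a₂ ⊗ a₃)), (b₁ ⊗ (b₂ ⊗ b₃))) ↦ (a₁⊗b₁) ⊗ ((a₂⊗b₂) ⊗ (a₃⊗b₃))` -/
noncomputable def Xi : (H ⊗[k] (H ⊗[k] H)) →ₗ[k] (H ⊗[k] (H ⊗[k] H)) →ₗ[k]
    ((H ⊗[k] H) ⊗[k] ((H ⊗[k] H) ⊗[k] (H ⊗[k] H))) :=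
  tmul2 (TensorProduct.mk k H H)
    (tmul2 (TensorProduct.mk k H H) (TensorProduct.mk k H H))

@[simp] lemma Xi_tmul (a₁ a₂ a₃ b₁ b₂ b₃ : H) :
    Xi (k := k) (a₁ ⊗ₜ (a₂ ⊗ₜ a₃)) (b₁ ⊗ₜ (b₂ ⊗ₜ b₃))
      = (a₁ ⊗ₜ b₁) ⊗ₜ ((a₂ ⊗ₜ b₂) ⊗ₜ (a₃ ⊗ₜ b₃)) := by
  simp [Xi]

lemma DeltaC_coassoc_aux1 (u v : H ⊗[k] H) :
    (TensorProduct.assoc k (H ⊗[k] H) (H ⊗[k] H) (H ⊗[k] H))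
      ((TensorProduct.map A.DeltaC LinearMap.id)
        ((TensorProduct.tensorTensorTensorComm k H H H H) (u ⊗ₜ v)))
    = Xi ((TensorProduct.assoc k H H H) ((TensorProduct.map A.uD LinearMap.id) u))
        ((TensorProduct.assoc k H H H) ((TensorProduct.map A.uD LinearMap.id) v)) := by
  induction u using TensorProduct.induction_on with
  | zero => simp
  | tmul a₁ a₂ =>
    induction v using TensorProduct.induction_on with
    | zero => simp
    | tmul b₁ b₂ =>
      simp only [TensorProduct.tensorTensorTensorComm_tmul, TensorProduct.map_tmul,
        LinearMap.id_coe, id_eq, DeltaC_tmul, TensorProduct.assoc_tmul]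
      generalize A.uD a₁ = s
      generalize A.uD b₁ = t
      induction s using TensorProduct.induction_on with
      | zero => simp
      | tmul x y =>
        induction t using TensorProduct.induction_on with
        | zero => simp
        | tmul z w => simp
        | add t₁ t₂ h₁ h₂ => simp only [TensorProduct.tmul_add, TensorProduct.add_tmul,
            map_add, LinearMap.add_apply, h₁, h₂]
      | add s₁ s₂ h₁ h₂ => simp only [TensorProduct.tmul_add, TensorProduct.add_tmul,
          map_add, LinearMap.add_apply, h₁, h₂]
    | add v₁ v₂ h₁ h₂ => simp only [TensorProduct.tmul_add, TensorProduct.add_tmul,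
        map_add, LinearMap.add_apply, h₁, h₂]
  | add u₁ u₂ h₁ h₂ => simp only [TensorProduct.tmul_add, TensorProduct.add_tmul,
      map_add, LinearMap.add_apply, h₁, h₂]

lemma DeltaC_coassoc_aux2 (u v : H ⊗[k] H) :
    (TensorProduct.map LinearMap.id A.DeltaC)
      ((TensorProduct.tensorTensorTensorComm k H H H H) (u ⊗ₜ v))
    = Xi ((TensorProduct.map LinearMap.id A.uD) u)
        ((TensorProduct.map LinearMap.id A.uD) v) := by
  induction u using TensorProduct.induction_on with
  | zero => simp
  | tmul a₁ a₂ =>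
    induction v using TensorProduct.induction_on with
    | zero => simp
    | tmul b₁ b₂ =>
      simp only [TensorProduct.tensorTensorTensorComm_tmul, TensorProduct.map_tmul,
        LinearMap.id_coe, id_eq, DeltaC_tmul]
      generalize A.uD a₂ = s
      generalize A.uD b₂ = t
      induction s using TensorProduct.induction_on with
      | zero => simp
      | tmul x y =>
        induction t using TensorProduct.induction_on with
        | zero => simp
        | tmul z w => simp
        | add t₁ t₂ h₁ h₂ => simp only [TensorProduct.tmul_add, TensorProduct.add_tmul,
            map_add, LinearMap.add_apply, h₁, h₂]
      | add s₁ s₂ h₁ h₂ => simp only [TensorProduct.tmul_add, TensorProduct.add_tmul,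
          map_add, LinearMap.add_apply, h₁, h₂]
    | add v₁ v₂ h₁ h₂ => simp only [TensorProduct.tmul_add, TensorProduct.add_tmul,
        map_add, LinearMap.add_apply, h₁, h₂]
  | add u₁ u₂ h₁ h₂ => simp only [TensorProduct.tmul_add, TensorProduct.add_tmul,
      map_add, LinearMap.add_apply, h₁, h₂]

lemma DeltaC_coassoc (c : H ⊗[k] H) :
    (TensorProduct.assoc k (H ⊗[k] H) (H ⊗[k] H) (H ⊗[k] H))
      ((TensorProduct.map A.DeltaC LinearMap.id) (A.DeltaC c))
    = (TensorProduct.map LinearMap.id A.DeltaC) (A.DeltaC c) := by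
  induction c using TensorProduct.induction_on with
  | zero => simp
  | tmul a b =>
    rw [DeltaC_tmul, DeltaC_coassoc_aux1, A.uD_coassoc, A.uD_coassoc,
      ← DeltaC_coassoc_aux2]
  | add c₁ c₂ h₁ h₂ => simp only [map_add, h₁, h₂]

end MonHomHopf
namespace MonHomHopf

variable {k H : Type*} [CommRing k] [AddCommGroup H] [Module k H] (A : MonHomHopf k H)

lemma DeltaC_counit_right_aux (u v : H ⊗[k] H) :
    (TensorProduct.rid k (H ⊗[k] H))
      ((TensorProduct.map LinearMap.id A.epsC)
        ((TensorProduct.tensorTensorTensorComm k H H H H) (u ⊗ₜ v)))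
    = ((TensorProduct.rid k H) ((TensorProduct.map LinearMap.id A.counit) u)) ⊗ₜ
        ((TensorProduct.rid k H) ((TensorProduct.map LinearMap.id A.counit) v)) := by
  induction u using TensorProduct.induction_on with
  | zero => simp
  | tmul a₁ a₂ =>
    induction v using TensorProduct.induction_on with
    | zero => simp
    | tmul b₁ b₂ =>
      simp only [TensorProduct.tensorTensorTensorComm_tmul, TensorProduct.map_tmul,
        LinearMap.id_coe, id_eq, epsC_tmul, TensorProduct.rid_tmul, TensorProduct.lid_tmul,
        TensorProduct.smul_tmul', TensorProduct.tmul_smul, mul_smul]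
      rw [smul_comm]
    | add v₁ v₂ h₁ h₂ => simp only [TensorProduct.tmul_add, TensorProduct.add_tmul,
        map_add, h₁, h₂]
  | add u₁ u₂ h₁ h₂ => simp only [TensorProduct.tmul_add, TensorProduct.add_tmul,
      map_add, h₁, h₂]

lemma DeltaC_counit_right (c : H ⊗[k] H) :
    (TensorProduct.rid k (H ⊗[k] H))
      ((TensorProduct.map LinearMap.id A.epsC) (A.DeltaC c)) = c := by
  induction c using TensorProduct.induction_on with
  | zero => simp
  | tmul a b => rw [DeltaC_tmul, DeltaC_counit_right_aux, A.uD_counit_right, A.uD_counit_right]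
  | add c₁ c₂ h₁ h₂ => simp only [map_add, h₁, h₂]

lemma DeltaC_counit_left_aux (u v : H ⊗[k] H) :
    (TensorProduct.lid k (H ⊗[k] H))
      ((TensorProduct.map A.epsC LinearMap.id)
        ((TensorProduct.tensorTensorTensorComm k H H H H) (u ⊗ₜ v)))
    = ((TensorProduct.lid k H) ((TensorProduct.map A.counit LinearMap.id) u)) ⊗ₜ
        ((TensorProduct.lid k H) ((TensorProduct.map A.counit LinearMap.id) v)) := by
  induction u using TensorProduct.induction_on with
  | zero => simp
  | tmul a₁ a₂ =>
    induction v using TensorProduct.induction_on with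
    | zero => simp
    | tmul b₁ b₂ =>
      simp only [TensorProduct.tensorTensorTensorComm_tmul, TensorProduct.map_tmul,
        LinearMap.id_coe, id_eq, epsC_tmul, TensorProduct.rid_tmul, TensorProduct.lid_tmul,
        TensorProduct.smul_tmul', TensorProduct.tmul_smul, mul_smul]
      rw [smul_comm]
    | add v₁ v₂ h₁ h₂ => simp only [TensorProduct.tmul_add, TensorProduct.add_tmul,
        map_add, h₁, h₂]
  | add u₁ u₂ h₁ h₂ => simp only [TensorProduct.tmul_add, TensorProduct.add_tmul,
      map_add, h₁, h₂]

lemma DeltaC_counit_left (c : H ⊗[k] H) :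
    (TensorProduct.lid k (H ⊗[k] H))
      ((TensorProduct.map A.epsC LinearMap.id) (A.DeltaC c)) = c := by
  induction c using TensorProduct.induction_on with
  | zero => simp
  | tmul a b => rw [DeltaC_tmul, DeltaC_counit_left_aux, A.uD_counit_left, A.uD_counit_left]
  | add c₁ c₂ h₁ h₂ => simp only [map_add, h₁, h₂]

lemma conv_eC (F : H ⊗[k] H →ₗ[k] H) (c : H ⊗[k] H) : A.conv F A.eC c = F c := by
  have aux : ∀ t : (H ⊗[k] H) ⊗[k] (H ⊗[k] H),
      TensorProduct.lift A.um (TensorProduct.map F A.eC t)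
        = F ((TensorProduct.rid k (H ⊗[k] H))
            ((TensorProduct.map LinearMap.id A.epsC) t)) := by
    intro t
    induction t using TensorProduct.induction_on with
    | zero => simp
    | tmul x y => simp [um_one, A.mul_one']
    | add t₁ t₂ h₁ h₂ => simp only [map_add, h₁, h₂]
  rw [conv_apply, aux, A.DeltaC_counit_right]

lemma eC_conv (F : H ⊗[k] H →ₗ[k] H) (c : H ⊗[k] H) : A.conv A.eC F c = F c := by
  have aux : ∀ t : (H ⊗[k] H) ⊗[k] (H ⊗[k] H),
      TensorProduct.lift A.um (TensorProduct.map A.eC F t)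
        = F ((TensorProduct.lid k (H ⊗[k] H))
            ((TensorProduct.map A.epsC LinearMap.id) t)) := by
    intro t
    induction t using TensorProduct.induction_on with
    | zero => simp
    | tmul x y => simp [one_um, A.one_mul']
    | add t₁ t₂ h₁ h₂ => simp only [map_add, h₁, h₂]
  rw [conv_apply, aux, A.DeltaC_counit_left]

lemma conv_assoc (F G K : H ⊗[k] H →ₗ[k] H) (c : H ⊗[k] H) :
    A.conv F (A.conv G K) c = A.conv (A.conv F G) K c := by
  have aux1 : ∀ t : (H ⊗[k] H) ⊗[k] (H ⊗[k] H),
      TensorProduct.map F (A.conv G K) t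
        = TensorProduct.map F (TensorProduct.lift A.um ∘ₗ TensorProduct.map G K)
            ((TensorProduct.map LinearMap.id A.DeltaC) t) := by
    intro t
    induction t using TensorProduct.induction_on with
    | zero => simp
    | tmul x y => simp [conv_apply]
    | add t₁ t₂ h₁ h₂ => simp only [map_add, h₁, h₂]
  have aux2 : ∀ t : (H ⊗[k] H) ⊗[k] (H ⊗[k] H),
      TensorProduct.map (A.conv F G) K t
        = TensorProduct.map (TensorProduct.lift A.um ∘ₗ TensorProduct.map F G) K
            ((TensorProduct.map A.DeltaC LinearMap.id) t) := by
    intro t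
    induction t using TensorProduct.induction_on with
    | zero => simp
    | tmul x y => simp [conv_apply]
    | add t₁ t₂ h₁ h₂ => simp only [map_add, h₁, h₂]
  have M3 : ∀ t : ((H ⊗[k] H) ⊗[k] (H ⊗[k] H)) ⊗[k] (H ⊗[k] H),
      TensorProduct.lift A.um
        ((TensorProduct.map F (TensorProduct.lift A.um ∘ₗ TensorProduct.map G K))
          ((TensorProduct.assoc k (H ⊗[k] H) (H ⊗[k] H) (H ⊗[k] H)) t))
      = TensorProduct.lift A.um
          ((TensorProduct.map (TensorProduct.lift A.um ∘ₗ TensorProduct.map F G) K) t) := by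
    intro t
    induction t using TensorProduct.induction_on with
    | zero => simp
    | tmul s z =>
      induction s using TensorProduct.induction_on with
      | zero => simp
      | tmul x y =>
        simp only [TensorProduct.assoc_tmul, TensorProduct.map_tmul,
          LinearMap.comp_apply, TensorProduct.lift.tmul]
        exact (A.um_assoc (F x) (G y) (K z)).symm
      | add s₁ s₂ h₁ h₂ => simp only [TensorProduct.add_tmul, map_add, h₁, h₂]
    | add t₁ t₂ h₁ h₂ => simp only [map_add, h₁, h₂]
  rw [conv_apply, aux1, ← A.DeltaC_coassoc, M3, conv_apply, aux2]

end MonHomHopf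
namespace MonHomHopf

variable {k H : Type*} [CommRing k] [AddCommGroup H] [Module k H] (A : MonHomHopf k H)

noncomputable def NN : H ⊗[k] H →ₗ[k] H :=
  TensorProduct.lift (((A.um).flip ∘ₗ A.S).compl₂ A.S)

@[simp] lemma NN_tmul (a b : H) : A.NN (a ⊗ₜ b) = A.um (A.S b) (A.S a) := by
  simp [NN]

noncomputable def PP : H ⊗[k] H →ₗ[k] H := TensorProduct.lift A.um

@[simp] lemma PP_tmul (a b : H) : A.PP (a ⊗ₜ b) = A.um a b := rfl

noncomputable def QQ : H ⊗[k] H →ₗ[k] H := A.S ∘ₗ TensorProduct.lift A.um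

@[simp] lemma QQ_tmul (a b : H) : A.QQ (a ⊗ₜ b) = A.S (A.um a b) := rfl

lemma conv_NN_PP_aux1 (b₁ b₂ : H) (u : H ⊗[k] H) :
    TensorProduct.lift A.um (TensorProduct.map A.NN A.PP
        ((TensorProduct.tensorTensorTensorComm k H H H H) (u ⊗ₜ (b₁ ⊗ₜ b₂))))
    = A.um (A.S b₁)
        (A.um (TensorProduct.lift A.um ((TensorProduct.map A.S LinearMap.id) u)) b₂) := by
  induction u using TensorProduct.induction_on with
  | zero => simp
  | tmul a₁ a₂ =>
    simp only [TensorProduct.tensorTensorTensorComm_tmul, TensorProduct.map_tmul,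
      TensorProduct.lift.tmul, NN_tmul, PP_tmul, LinearMap.id_coe, id_eq]
    rw [A.um_assoc, ← A.um_assoc (A.S a₁) a₂ b₂]
  | add u₁ u₂ h₁ h₂ => simp only [TensorProduct.tmul_add, TensorProduct.add_tmul,
      map_add, LinearMap.add_apply, h₁, h₂]

lemma conv_NN_PP_aux2 (a : H) (v : H ⊗[k] H) :
    TensorProduct.lift A.um (TensorProduct.map A.NN A.PP
        ((TensorProduct.tensorTensorTensorComm k H H H H) (A.uD a ⊗ₜ v)))
    = A.counit a •
        TensorProduct.lift A.um ((TensorProduct.map A.S LinearMap.id) v) := by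
  induction v using TensorProduct.induction_on with
  | zero => simp
  | tmul b₁ b₂ =>
    rw [conv_NN_PP_aux1, A.uD_antipode_left]
    simp only [TensorProduct.map_tmul, TensorProduct.lift.tmul, LinearMap.id_coe, id_eq,
      map_smul, LinearMap.smul_apply]
    rw [one_um]
  | add v₁ v₂ h₁ h₂ => simp only [TensorProduct.tmul_add, TensorProduct.add_tmul,
      map_add, LinearMap.add_apply, h₁, h₂, smul_add]

lemma conv_NN_PP (c : H ⊗[k] H) : A.conv A.NN A.PP c = A.eC c := by
  induction c using TensorProduct.induction_on with
  | zero => simp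
  | tmul a b =>
    rw [conv_apply, DeltaC_tmul, conv_NN_PP_aux2, A.uD_antipode_left]
    simp [smul_smul]
  | add c₁ c₂ h₁ h₂ => simp only [map_add, h₁, h₂]

lemma conv_PP_QQ_aux (u v : H ⊗[k] H) :
    TensorProduct.lift A.um (TensorProduct.map A.PP A.QQ
        ((TensorProduct.tensorTensorTensorComm k H H H H) (u ⊗ₜ v)))
    = TensorProduct.lift A.um
        ((TensorProduct.map LinearMap.id A.S) (tmul2 A.um A.um u v)) := by
  induction u using TensorProduct.induction_on with
  | zero => simp
  | tmul a₁ a₂ =>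
    induction v using TensorProduct.induction_on with
    | zero => simp
    | tmul b₁ b₂ => simp
    | add v₁ v₂ h₁ h₂ => simp only [TensorProduct.tmul_add, TensorProduct.add_tmul,
        map_add, LinearMap.add_apply, h₁, h₂]
  | add u₁ u₂ h₁ h₂ => simp only [TensorProduct.tmul_add, TensorProduct.add_tmul,
      map_add, LinearMap.add_apply, h₁, h₂]

lemma conv_PP_QQ (c : H ⊗[k] H) : A.conv A.PP A.QQ c = A.eC c := by
  induction c using TensorProduct.induction_on with
  | zero => simp
  | tmul a b =>
    rw [conv_apply, DeltaC_tmul, conv_PP_QQ_aux, ← A.uD_um, A.uD_antipode_right,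
      A.counit_um]
    simp [mul_smul]
  | add c₁ c₂ h₁ h₂ => simp only [map_add, h₁, h₂]

lemma NN_eq_QQ : A.NN = A.QQ := by
  have hNP : A.conv A.NN A.PP = A.eC := LinearMap.ext (A.conv_NN_PP)
  have hPQ : A.conv A.PP A.QQ = A.eC := LinearMap.ext (A.conv_PP_QQ)
  apply LinearMap.ext
  intro c
  calc A.NN c = A.conv A.NN A.eC c := (A.conv_eC _ c).symm
    _ = A.conv A.NN (A.conv A.PP A.QQ) c := by rw [hPQ]
    _ = A.conv (A.conv A.NN A.PP) A.QQ c := A.conv_assoc _ _ _ c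
    _ = A.conv A.eC A.QQ c := by rw [hNP]
    _ = A.QQ c := A.eC_conv _ c

/-- anti-multiplicativity of the antipode -/
lemma S_mul (a b : H) : A.S (A.mul a b) = A.mul (A.S b) (A.S a) := by
  have h := LinearMap.congr_fun A.NN_eq_QQ (a ⊗ₜ b)
  simp only [NN_tmul, QQ_tmul, um_apply] at h
  rw [A.S_alpha_symm] at h
  exact (A.α.symm.injective h).symm

end MonHomHopf

namespace MonHomHopf

variable {k H : Type*} [CommRing k] [AddCommGroup H] [Module k H] (A : MonHomHopf k H)

noncomputable def Phi (g : H) : H →ₗ[k] H →ₗ[k] H :=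
  (A.mul.comp ((A.mul.flip (A.α.symm g)).comp A.S)).compl₂ A.α.toLinearMap

@[simp] lemma Phi_apply (g x y : H) :
    A.Phi g x y = A.mul (A.mul (A.S x) (A.α.symm g)) (A.α y) := rfl

lemma adRL_eq (g h : H) : A.adRL g h = TensorProduct.lift (A.Phi g) (A.comul h) := rfl

lemma lift_Phi_zero (t : H ⊗[k] H) : TensorProduct.lift (A.Phi 0) t = 0 := by
  induction t using TensorProduct.induction_on with
  | zero => simp
  | tmul x y => simp
  | add t₁ t₂ h₁ h₂ => simp [h₁, h₂]

lemma lift_Phi_add (x₁ x₂ : H) (t : H ⊗[k] H) :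
    TensorProduct.lift (A.Phi (x₁ + x₂)) t
      = TensorProduct.lift (A.Phi x₁) t + TensorProduct.lift (A.Phi x₂) t := by
  induction t using TensorProduct.induction_on with
  | zero => simp
  | tmul x y => simp [map_add, LinearMap.add_apply]
  | add t₁ t₂ h₁ h₂ =>
    simp only [map_add, h₁, h₂]
    abel

lemma part1_aux (g : H) (t : H ⊗[k] H) :
    A.α (TensorProduct.lift (A.Phi g) t)
      = TensorProduct.lift (A.Phi (A.α g))
          ((TensorProduct.map A.α.toLinearMap A.α.toLinearMap) t) := by
  induction t using TensorProduct.induction_on with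
  | zero => simp
  | tmul x y =>
    simp [A.alpha_mul, A.S_alpha, A.α.symm_apply_apply]
  | add t₁ t₂ h₁ h₂ => simp only [map_add, h₁, h₂]

lemma part2_core (g h₁ h₂ l₁ l₂ : H) :
    A.mul (A.mul (A.S (A.α l₁))
        (A.α.symm (A.mul (A.mul (A.S h₁) (A.α.symm g)) (A.α h₂)))) (A.α (A.α l₂))
      = A.mul (A.mul (A.S (A.mul h₁ l₁)) g) (A.α (A.mul h₂ l₂)) := by
  rw [A.alpha_symm_mul (A.mul (A.S h₁) (A.α.symm g)) (A.α h₂), A.α.symm_apply_apply,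
    A.alpha_symm_mul (A.S h₁) (A.α.symm g), A.S_alpha l₁]
  rw [A.hom_assoc (A.S l₁) (A.mul (A.α.symm (A.S h₁)) (A.α.symm (A.α.symm g))) h₂]
  rw [← A.hom_assoc (A.mul (A.S l₁)
      (A.mul (A.α.symm (A.S h₁)) (A.α.symm (A.α.symm g)))) (A.α h₂) (A.α l₂)]
  rw [A.alpha_mul (A.S l₁) (A.mul (A.α.symm (A.S h₁)) (A.α.symm (A.α.symm g)))]
  rw [A.alpha_mul (A.α.symm (A.S h₁)) (A.α.symm (A.α.symm g)), A.α.apply_symm_apply,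
    A.α.apply_symm_apply]
  rw [A.hom_assoc (A.S l₁) (A.S h₁) (A.α.symm g), A.α.apply_symm_apply]
  rw [← A.S_mul h₁ l₁, ← A.alpha_mul h₂ l₂]

lemma part2_aux (g : H) (u v : H ⊗[k] H) :
    TensorProduct.lift (A.Phi (A.α g)) (tmul2 A.mul A.mul u v)
      = TensorProduct.lift (A.Phi (TensorProduct.lift (A.Phi g) u))
          ((TensorProduct.map A.α.toLinearMap A.α.toLinearMap) v) := by
  induction u using TensorProduct.induction_on with
  | zero => simp [A.lift_Phi_zero]
  | tmul h₁ h₂ =>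
    induction v using TensorProduct.induction_on with
    | zero => simp
    | tmul l₁ l₂ =>
      simp only [tmul2_tmul, TensorProduct.lift.tmul, TensorProduct.map_tmul,
        LinearEquiv.coe_coe, Phi_apply, A.α.symm_apply_apply]
      exact (A.part2_core g h₁ h₂ l₁ l₂).symm
    | add v₁ v₂ h₁ h₂ => simp only [map_add, h₁, h₂]
  | add u₁ u₂ h₁ h₂ => simp only [map_add, LinearMap.add_apply, A.lift_Phi_add, h₁, h₂]

lemma adRL_alpha (g h : H) : A.α (A.adRL g h) = A.adRL (A.α g) (A.α h) := by
  rw [adRL_eq, adRL_eq, A.comul_alpha]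
  exact A.part1_aux g (A.comul h)

lemma adRL_mul (g h l : H) :
    A.adRL (A.α g) (A.mul h l) = A.adRL (A.adRL g h) (A.α l) := by
  rw [adRL_eq, adRL_eq, A.comul_mul, A.comul_alpha]
  exact A.part2_aux g (A.comul h) (A.comul l)

lemma adRL_one (g : H) : A.adRL g A.one = A.α g := by
  rw [adRL_eq, A.comul_one]
  simp only [TensorProduct.lift.tmul, Phi_apply, A.S_one, A.alpha_one, A.mul_one',
    A.one_mul', A.α.apply_symm_apply]

end MonHomHopf

/-- the right adjoint Hom-action makes `(H,α)` a right Hom-module over itself. -/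
theorem right_adjoint_action_right_module {k H : Type*} [CommRing k] [AddCommGroup H] [Module k H]
    (A : MonHomHopf k H) :
    (∀ g h, A.α (A.adRL g h) = A.adRL (A.α g) (A.α h)) ∧
    (∀ g h l, A.adRL (A.α g) (A.mul h l) = A.adRL (A.adRL g h) (A.α l)) ∧
    (∀ g, A.adRL g A.one = A.α g) := by
  exact ⟨A.adRL_alpha, A.adRL_mul, A.adRL_one⟩
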